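/- Let M be a subset of a real normed space X and S, T : X → X self-mappings such that u ∈ Fix(S) ∩ Fix(T) for some u ∈ X and T(∂M ∩ M) ⊆ M. Assume S(P_M(u)) = P_M(u), P_M(u) is closed and q-starshaped with q ∈ Fix(S), the pair (S,T) is a generalized JH-suboperator pair with order n₀ on P_M(u), and for all x, y ∈ C_M^S(u) ∪ {u}: if y = u then ψ(∫₀^{‖Tx−Ty‖} φ(t)dt) ≤ F(ψ(∫₀^{‖Sx−Sy‖} φ(t)dt), φᵤ(∫₀^{‖Sx−Sy‖} φ(t)dt)), and if y ∈ C_M^S(u) then for each k ∈ (0,1), ψ(∫₀^{‖Tx−Ty‖} φ(t)dt) ≤ F(ψ(∫₀^{(1/k)γ(m₃(x,y))} φ(t)dt), φᵤ(∫₀^{(1/k)γ(m₃(x,y))} φ(t)dt)), where ψ is an altering distance function, φᵤ is an ultra altering distance function, F is a C-class function, and the triple (ψ, φᵤ, F) is monotone. If cl(T(C_M^S(u))) is compact and S and T are continuous on C_M^S(u), then P_M(u) ∩ Fix(S) ∩ Fix(T) ≠ ∅. -/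

import Mathlib

open MeasureTheory Filter Topology Set

noncomputable section

/-- The integral `∫₀^a φ(t) dt`. -/
def intPhi (phi : ℝ → ℝ) (a : ℝ) : ℝ := ∫ t in (0:ℝ)..a, phi t

/-- `φ : [0,∞) → [0,∞)` is Lebesgue integrable, summable, nonnegative, with
`∫₀^ε φ(t)dt > 0` for all `ε > 0`. -/
def PhiAdmissible (phi : ℝ → ℝ) : Prop :=
  (∀ t ≥ (0:ℝ), 0 ≤ phi t) ∧ (∀ b : ℝ, IntervalIntegrable phi volume 0 b) ∧
  ∀ ε > (0:ℝ), 0 < intPhi phi ε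

/-- Altering distance function: nondecreasing, continuous, `ψ t = 0 ↔ t = 0` on `[0,∞)`. -/
def AlteringDistance (ψ : ℝ → ℝ) : Prop :=
  MonotoneOn ψ (Ici 0) ∧ ContinuousOn ψ (Ici 0) ∧ ∀ t ≥ (0:ℝ), (ψ t = 0 ↔ t = 0)

/-- Ultra altering distance function: continuous, nondecreasing, positive on `(0,∞)`,
nonnegative at `0`. -/
def UltraAltering (φu : ℝ → ℝ) : Prop :=
  ContinuousOn φu (Ici 0) ∧ MonotoneOn φu (Ici 0) ∧ (∀ t > (0:ℝ), 0 < φu t) ∧ 0 ≤ φu 0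

/-- C-class function: continuous on `[0,∞)²`, `F s t ≤ s`, and `F s t = s → s = 0 ∨ t = 0`. -/
def CClassFun (F : ℝ → ℝ → ℝ) : Prop :=
  ContinuousOn (Function.uncurry F) (Ici 0 ×ˢ Ici 0) ∧
  (∀ s ≥ (0:ℝ), ∀ t ≥ (0:ℝ), F s t ≤ s) ∧
  (∀ s ≥ (0:ℝ), ∀ t ≥ (0:ℝ), F s t = s → s = 0 ∨ t = 0)

/-- The triple `(ψ, φᵤ, F)` is monotone. -/
def MonotoneTriple (ψ φu : ℝ → ℝ) (F : ℝ → ℝ → ℝ) : Prop :=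
  ∀ x y : ℝ, 0 ≤ x → x ≤ y → F (ψ x) (φu x) ≤ F (ψ y) (φu y)

/-- The triple `(ψ, φᵤ, F)` is strictly monotone. -/
def StrictMonotoneTriple (ψ φu : ℝ → ℝ) (F : ℝ → ℝ → ℝ) : Prop :=
  ∀ x y : ℝ, 0 ≤ x → x < y → F (ψ x) (φu x) < F (ψ y) (φu y)

/-- `γ : (0,∞) → (0,∞)` is nondecreasing with `γ t < t` for all `t > 0`. -/
def GammaAdmissible (γ : ℝ → ℝ) : Prop :=
  (∀ t > (0:ℝ), 0 < γ t) ∧ MonotoneOn γ (Ioi 0) ∧ ∀ t > (0:ℝ), γ t < t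

variable {X : Type*} [NormedAddCommGroup X] [NormedSpace ℝ X]

/-- Fixed points of `T` lying in `M`. -/
def FixOn (T : X → X) (M : Set X) : Set X := {x ∈ M | T x = x}

/-- Points of coincidence `PC(S,T)` of the pair `(S,T)` over the set `M`. -/
def PCset (S T : X → X) (M : Set X) : Set X := {w | ∃ x ∈ M, S x = w ∧ T x = w}

/-- `(S,T)` is a generalized JH-operator pair with order `n` on `M`:
there is `x ∈ M` and `w = Sx = Tx ∈ PC(S,T)` with `‖w - x‖ ≤ (δ(PC(S,T)))ⁿ`. -/
def GenJHOp (S T : X → X) (M : Set X) (n : ℕ) : Prop :=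
  ∃ x ∈ M, S x = T x ∧ ‖S x - x‖ ≤ Metric.diam (PCset S T M) ^ n

/-- `(S,T)` is a generalized JH-suboperator pair with order `n` on `M` (w.r.t. `q`):
for each `k ∈ [0,1]`, `(S, T_k)` with `T_k x = (1-k)q + kTx` is a generalized JH-operator
pair with order `n`. -/
def GenJHSubOp (S T : X → X) (M : Set X) (q : X) (n : ℕ) : Prop :=
  ∀ k ∈ Icc (0:ℝ) 1, GenJHOp S (fun x => (1 - k) • q + k • T x) M n

/-- `M` is `q`-starshaped. -/
def Starshaped (M : Set X) (q : X) : Prop :=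
  q ∈ M ∧ ∀ x ∈ M, segment ℝ q x ⊆ M

def m1 (S T : X → X) (x y : X) : ℝ :=
  max (max ‖S x - S y‖ ‖S x - T x‖)
    (max ‖S y - T y‖ ((‖T x - T y‖ + ‖S y - T x‖) / 2))

def n1 (S T : X → X) (x y : X) : ℝ :=
  max ‖S x - S y‖ (max ‖T x - S x‖ ‖S y - T y‖)

def m2 (S T : X → X) (x y : X) : ℝ :=
  max (max ‖S x - S y‖ ‖S x - T x‖)
    (max ‖S y - T y‖ ((‖S x - T y‖ + ‖S y - T x‖) / 2))

def m3 (S T : X → X) (q x y : X) : ℝ :=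
  max (max ‖S x - S y‖ (Metric.infDist (S x) (segment ℝ q (T x))))
    (max (Metric.infDist (S y) (segment ℝ q (T y)))
      ((Metric.infDist (S x) (segment ℝ q (T y)) +
        Metric.infDist (S y) (segment ℝ q (T x))) / 2))

/-- `Y^{a} = {f_a(k) : k ∈ [0,1]}` for a family `f`. -/
def Yfam (f : X → ℝ → X) (a : X) : Set X := f a '' Icc (0:ℝ) 1

def m4 (f : X → ℝ → X) (S T : X → X) (x y : X) : ℝ :=
  max (max ‖S x - S y‖ (Metric.infDist (S x) (Yfam f (T x))))
    (max (Metric.infDist (S y) (Yfam f (T y)))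
      ((Metric.infDist (S x) (Yfam f (T y)) +
        Metric.infDist (S y) (Yfam f (T x))) / 2))

/-- `ℑ = {f_α}_{α ∈ M}` is a family of functions `[0,1] → M` with `f_α(1) = α`. -/
def FamilyOn (f : X → ℝ → X) (M : Set X) : Prop :=
  (∀ a ∈ M, ∀ t ∈ Icc (0:ℝ) 1, f a t ∈ M) ∧ ∀ a ∈ M, f a 1 = a

/-- The family is contractive with contractiveness function `Φ : (0,1) → (0,1)`. -/
def ContractiveFamily (f : X → ℝ → X) (M : Set X) (Phi : ℝ → ℝ) : Prop :=
  (∀ t ∈ Ioo (0:ℝ) 1, Phi t ∈ Ioo (0:ℝ) 1) ∧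
  ∀ a ∈ M, ∀ b ∈ M, ∀ t ∈ Ioo (0:ℝ) 1, ‖f a t - f b t‖ ≤ Phi t * ‖a - b‖

/-- The family is jointly continuous: `tₙ → t₀` and `αₙ → α₀` imply
`f_{αₙ}(tₙ) → f_{α₀}(t₀)`. -/
def JointlyContinuousFamily (f : X → ℝ → X) (M : Set X) : Prop :=
  ∀ (tn : ℕ → ℝ) (t0 : ℝ), (∀ n, tn n ∈ Icc (0:ℝ) 1) → t0 ∈ Icc (0:ℝ) 1 →
    Tendsto tn atTop (𝓝 t0) →
    ∀ (an : ℕ → X) (a0 : X), (∀ n, an n ∈ M) → a0 ∈ M →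
      Tendsto an atTop (𝓝 a0) →
      Tendsto (fun n => f (an n) (tn n)) atTop (𝓝 (f a0 t0))

/-- `(S,T)` is a generalized JHℑ-suboperator pair with order `n` on `M`:
for each `k ∈ [0,1]`, `(S, T_k)` with `T_k x = f_{Tx}(k)` is a generalized
JH-operator pair with order `n`. -/
def GenJHImSubOp (f : X → ℝ → X) (S T : X → X) (M : Set X) (n : ℕ) : Prop :=
  ∀ k ∈ Icc (0:ℝ) 1, GenJHOp S (fun x => f (T x) k) M n

/-- Weak convergence of a sequence. -/
def WeakTendsTo (x : ℕ → X) (a : X) : Prop :=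
  ∀ f : StrongDual ℝ X, Tendsto (fun n => f (x n)) atTop (𝓝 (f a))

/-- Weak (sequential) closure. -/
def WSeqCl (A : Set X) : Set X := {a | ∃ x : ℕ → X, (∀ n, x n ∈ A) ∧ WeakTendsTo x a}

/-- Weak (sequential) compactness. -/
def WSeqCompact (A : Set X) : Prop :=
  ∀ x : ℕ → X, (∀ n, x n ∈ A) →
    ∃ a ∈ A, ∃ g : ℕ → ℕ, StrictMono g ∧ WeakTendsTo (x ∘ g) a

/-- `T` is completely continuous on `M`: weak convergence implies strong
convergence of images. -/
def CompletelyContinuousOn (T : X → X) (M : Set X) : Prop :=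
  ∀ (x : ℕ → X) (a : X), (∀ n, x n ∈ M) → a ∈ M → WeakTendsTo x a →
    Tendsto (fun n => T (x n)) atTop (𝓝 (T a))

/-- `S` is weakly continuous on `M`. -/
def WeaklyContinuousOn (S : X → X) (M : Set X) : Prop :=
  ∀ (x : ℕ → X) (a : X), (∀ n, x n ∈ M) → a ∈ M → WeakTendsTo x a →
    WeakTendsTo (fun n => S (x n)) (S a)

/-- `G` is demiclosed at `0` on `M`. -/
def DemiclosedAtZero (G : X → X) (M : Set X) : Prop :=
  ∀ (x : ℕ → X) (a : X), (∀ n, x n ∈ M) → a ∈ M → WeakTendsTo x a →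
    Tendsto (fun n => G (x n)) atTop (𝓝 (0 : X)) → G a = 0

/-- `T` is hemicompact on `M`. -/
def Hemicompact (T : X → X) (M : Set X) : Prop :=
  ∀ x : ℕ → X, (∀ n, x n ∈ M) →
    Tendsto (fun n => ‖x n - T (x n)‖) atTop (𝓝 (0 : ℝ)) →
    ∃ (a : X) (g : ℕ → ℕ), StrictMono g ∧ Tendsto (x ∘ g) atTop (𝓝 a)

/-- Opial's condition. -/
def OpialCondition (Y : Type*) [NormedAddCommGroup Y] [NormedSpace ℝ Y] : Prop :=
  ∀ (x : ℕ → Y) (a : Y), WeakTendsTo x a → ∀ y : Y, y ≠ a →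
    liminf (fun n => ‖x n - a‖) atTop < liminf (fun n => ‖x n - y‖) atTop

/-- `P_M(u)`, the set of best approximations to `u` out of `M`. -/
def PMset (M : Set X) (u : X) : Set X := {x ∈ M | ‖x - u‖ = Metric.infDist u M}

/-- `C_M^S(u) = {x ∈ M : Sx ∈ P_M(u)}`. -/
def CMSset (M : Set X) (S : X → X) (u : X) : Set X := {x ∈ M | S x ∈ PMset M u}


lemma intPhi_nonneg' {phi : ℝ → ℝ} (hphi : PhiAdmissible phi) {a : ℝ} (ha : 0 ≤ a) :
    0 ≤ intPhi phi a := by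
  unfold intPhi
  exact intervalIntegral.integral_nonneg ha (fun t ht => hphi.1 t ht.1)

lemma intPhi_mono' {phi : ℝ → ℝ} (hphi : PhiAdmissible phi) {a b : ℝ} (ha : 0 ≤ a)
    (hab : a ≤ b) : intPhi phi a ≤ intPhi phi b := by
  have h1 : IntervalIntegrable phi volume 0 a := hphi.2.1 a
  have h2 : IntervalIntegrable phi volume a b := (hphi.2.1 a).symm.trans (hphi.2.1 b)
  have hadd : intPhi phi a + (∫ t in a..b, phi t) = intPhi phi b :=
    intervalIntegral.integral_add_adjacent_intervals h1 h2
  have hnn : 0 ≤ ∫ t in a..b, phi t :=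
    intervalIntegral.integral_nonneg hab (fun t ht => hphi.1 t (ha.trans ht.1))
  linarith

theorem stmt_17 {X : Type*} [NormedAddCommGroup X] [NormedSpace ℝ X]
    (M : Set X) (S T : X → X) (u : X) (hSu : S u = u) (hTu : T u = u)
    (hTbd : T '' (frontier M ∩ M) ⊆ M)
    (hSPM : S '' PMset M u = PMset M u)
    (hPMcl : IsClosed (PMset M u))
    (q : X) (hstar : Starshaped (PMset M u) q) (hq : S q = q)
    (phi ψ φu : ℝ → ℝ) (F : ℝ → ℝ → ℝ)
    (hphi : PhiAdmissible phi) (hψ : AlteringDistance ψ) (hφu : UltraAltering φu)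
    (hF : CClassFun F) (hmono : MonotoneTriple ψ φu F)
    (γ : ℝ → ℝ) (hγ : GammaAdmissible γ)
    (n₀ : ℕ) (hn₀ : 1 ≤ n₀) (hJH : GenJHSubOp S T (PMset M u) q n₀)
    (hcontr : ∀ x ∈ CMSset M S u ∪ {u}, ∀ y ∈ CMSset M S u ∪ {u},
      (y = u →
        ψ (intPhi phi ‖T x - T y‖) ≤
          F (ψ (intPhi phi ‖S x - S y‖)) (φu (intPhi phi ‖S x - S y‖))) ∧
      (y ∈ CMSset M S u → ∀ k ∈ Ioo (0:ℝ) 1,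
        ψ (intPhi phi ‖T x - T y‖) ≤
          F (ψ (intPhi phi ((1 / k) * γ (m3 S T q x y))))
            (φu (intPhi phi ((1 / k) * γ (m3 S T q x y))))))
    (hcmp : IsCompact (closure (T '' CMSset M S u)))
    (hScont : ContinuousOn S (CMSset M S u)) (hTcont : ContinuousOn T (CMSset M S u)) :
    ∃ x ∈ PMset M u, S x = x ∧ T x = x := by
  have hSP : ∀ x ∈ PMset M u, S x ∈ PMset M u := fun x hx =>
    hSPM ▸ Set.mem_image_of_mem S hx
  have hPsubM : PMset M u ⊆ M := fun x hx => hx.1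
  have hPC : PMset M u ⊆ CMSset M S u := fun x hx => ⟨hPsubM hx, hSP x hx⟩
  have hψ0 : ψ 0 = 0 := (hψ.2.2 0 le_rfl).2 rfl
  -- key: for each k ∈ (0,1), there is x ∈ P_M(u) with Sx = x = (1-k)q + kTx
  have key : ∀ k ∈ Ioo (0:ℝ) 1, ∃ x ∈ PMset M u, S x = x ∧ x = (1-k) • q + k • T x := by
    intro k hk
    have hkpos : (0:ℝ) < k := hk.1
    obtain ⟨x, hxP, hSTx, hbd⟩ := hJH k ⟨hk.1.le, hk.2.le⟩
    have hsub : (PCset S (fun y => (1-k) • q + k • T y) (PMset M u)).Subsingleton := by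
      rintro w1 ⟨x1, hx1, hS1, hT1⟩ w2 ⟨x2, hx2, hS2, hT2⟩
      simp only at hT1 hT2
      subst hS1; subst hS2
      by_contra hne
      have hx1C : x1 ∈ CMSset M S u := hPC hx1
      have hx2C : x2 ∈ CMSset M S u := hPC hx2
      set D := ‖S x1 - S x2‖ with hDdef
      have hDpos : 0 < D := norm_pos_iff.mpr (sub_ne_zero.mpr hne)
      -- segment memberships
      have hseg1 : S x1 ∈ segment ℝ q (T x1) :=
        ⟨1 - k, k, by linarith [hk.2], hkpos.le, by ring, hT1⟩
      have hseg2 : S x2 ∈ segment ℝ q (T x2) :=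
        ⟨1 - k, k, by linarith [hk.2], hkpos.le, by ring, hT2⟩
      -- m3 equals D
      have d11 : Metric.infDist (S x1) (segment ℝ q (T x1)) = 0 :=
        Metric.infDist_zero_of_mem hseg1
      have d22 : Metric.infDist (S x2) (segment ℝ q (T x2)) = 0 :=
        Metric.infDist_zero_of_mem hseg2
      have d12 : Metric.infDist (S x1) (segment ℝ q (T x2)) ≤ D := by
        have := Metric.infDist_le_dist_of_mem (x := S x1) hseg2
        rwa [dist_eq_norm] at this
      have d21 : Metric.infDist (S x2) (segment ℝ q (T x1)) ≤ D := by
        have := Metric.infDist_le_dist_of_mem (x := S x2) hseg1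
        rwa [dist_eq_norm, norm_sub_rev] at this
      have hn12 : 0 ≤ Metric.infDist (S x1) (segment ℝ q (T x2)) := Metric.infDist_nonneg
      have hn21 : 0 ≤ Metric.infDist (S x2) (segment ℝ q (T x1)) := Metric.infDist_nonneg
      have hm3 : m3 S T q x1 x2 = D := by
        rw [m3, d11, d22]
        apply le_antisymm
        · exact max_le (max_le le_rfl hDpos.le) (max_le hDpos.le (by linarith))
        · exact le_trans (le_max_left D 0) (le_max_left _ _)
      -- relation between ‖Tx1 - Tx2‖ and D
      have hsmul : S x1 - S x2 = k • (T x1 - T x2) := by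
        rw [← hT1, ← hT2]; module
      have hE1 : ‖T x1 - T x2‖ = D / k := by
        rw [hDdef, hsmul, norm_smul, Real.norm_eq_abs, abs_of_pos hkpos]
        field_simp
      set E2 := (1/k) * γ D with hE2def
      have hγDpos : 0 < γ D := hγ.1 D hDpos
      have hγDlt : γ D < D := hγ.2.2 D hDpos
      have hE2pos : 0 < E2 := by positivity
      have hE2lt : E2 < ‖T x1 - T x2‖ := by
        rw [hE1, hE2def, one_div, inv_mul_eq_div]
        gcongr
      -- integrals
      have hIE2pos : 0 < intPhi phi E2 := hphi.2.2 E2 hE2pos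
      have hIle : intPhi phi E2 ≤ intPhi phi ‖T x1 - T x2‖ :=
        intPhi_mono' hphi hE2pos.le hE2lt.le
      have hIE2mem : intPhi phi E2 ∈ Ici (0:ℝ) := hIE2pos.le
      have hIE1mem : intPhi phi ‖T x1 - T x2‖ ∈ Ici (0:ℝ) :=
        intPhi_nonneg' hphi (norm_nonneg _)
      have hψnn : 0 ≤ ψ (intPhi phi E2) := by
        have := hψ.1 (self_mem_Ici) hIE2mem hIE2pos.le
        rwa [hψ0] at this
      have hφupos : 0 < φu (intPhi phi E2) := hφu.2.2.1 _ hIE2pos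
      -- contractive condition
      have hc := (hcontr x1 (Set.mem_union_left _ hx1C) x2 (Set.mem_union_left _ hx2C)).2
        hx2C k hk
      rw [hm3] at hc
      have h2 : F (ψ (intPhi phi E2)) (φu (intPhi phi E2)) ≤ ψ (intPhi phi E2) :=
        hF.2.1 _ hψnn _ hφupos.le
      have h3 : ψ (intPhi phi E2) ≤ ψ (intPhi phi ‖T x1 - T x2‖) :=
        hψ.1 hIE2mem hIE1mem hIle
      have heq : F (ψ (intPhi phi E2)) (φu (intPhi phi E2)) = ψ (intPhi phi E2) :=
        le_antisymm h2 (h3.trans hc)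
      rcases hF.2.2 _ hψnn _ hφupos.le heq with h | h
      · exact absurd ((hψ.2.2 _ hIE2pos.le).1 h) (ne_of_gt hIE2pos)
      · exact absurd h (ne_of_gt hφupos)
    have hdiam : Metric.diam (PCset S (fun y => (1-k) • q + k • T y) (PMset M u)) = 0 :=
      Metric.diam_subsingleton hsub
    rw [hdiam, zero_pow (by omega)] at hbd
    have hSxx : S x = x := by
      have : S x - x = 0 := norm_le_zero_iff.mp hbd
      exact sub_eq_zero.mp this
    refine ⟨x, hxP, hSxx, ?_⟩
    conv_lhs => rw [← hSxx]
    simpa using hSTx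
  -- the sequence k_n = 1 - 1/(n+2)
  have hks : ∀ n : ℕ, (1 - 1/((n:ℝ)+2)) ∈ Ioo (0:ℝ) 1 := by
    intro n
    have h1 : (0:ℝ) < (n:ℝ) + 2 := by positivity
    constructor
    · have : 1/((n:ℝ)+2) < 1 := by
        rw [div_lt_one h1]; linarith
      linarith
    · have : 0 < 1/((n:ℝ)+2) := by positivity
      linarith
  choose x hxP hSx hxk using fun n => key _ (hks n)
  have hkstend : Tendsto (fun n : ℕ => 1 - 1/((n:ℝ)+2)) atTop (𝓝 1) := by
    have h0 : Tendsto (fun n : ℕ => 1/((n:ℝ)+2)) atTop (𝓝 0) := by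
      apply Tendsto.div_atTop (tendsto_const_nhds)
      exact tendsto_atTop_add_const_right atTop 2 tendsto_natCast_atTop_atTop
    simpa using h0.const_sub (1:ℝ)
  -- compactness: subsequence of T xₙ converges
  have hTximg : ∀ n, T (x n) ∈ closure (T '' CMSset M S u) := fun n =>
    subset_closure (Set.mem_image_of_mem T (hPC (hxP n)))
  obtain ⟨a, _, g, hg, hTa⟩ := hcmp.tendsto_subseq hTximg
  have hkg : Tendsto (fun n : ℕ => 1 - 1/(((g n):ℝ)+2)) atTop (𝓝 1) :=
    hkstend.comp hg.tendsto_atTop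
  have hxg : Tendsto (fun n => x (g n)) atTop (𝓝 a) := by
    have h1 : Tendsto (fun n => (1 - (1 - 1/(((g n):ℝ)+2))) • q
        + (1 - 1/(((g n):ℝ)+2)) • T (x (g n))) atTop (𝓝 ((1-(1:ℝ)) • q + (1:ℝ) • a)) :=
      ((tendsto_const_nhds.sub hkg).smul tendsto_const_nhds).add (hkg.smul hTa)
    have h2 : ((1-(1:ℝ)) • q + (1:ℝ) • a) = a := by simp
    rw [h2] at h1
    refine h1.congr (fun n => ?_)
    exact (hxk (g n)).symm
  have haP : a ∈ PMset M u :=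
    hPMcl.mem_of_tendsto hxg (Filter.Eventually.of_forall (fun n => hxP (g n)))
  have haC : a ∈ CMSset M S u := hPC haP
  have hxgC : Tendsto (fun n => x (g n)) atTop (𝓝[CMSset M S u] a) := by
    rw [tendsto_nhdsWithin_iff]
    exact ⟨hxg, Filter.Eventually.of_forall (fun n => hPC (hxP (g n)))⟩
  have hTa2 : Tendsto (fun n => T (x (g n))) atTop (𝓝 (T a)) :=
    (hTcont a haC).tendsto.comp hxgC
  have hTfix : T a = a := tendsto_nhds_unique hTa2 hTa
  have hSa2 : Tendsto (fun n => S (x (g n))) atTop (𝓝 (S a)) :=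
    (hScont a haC).tendsto.comp hxgC
  have hSa3 : Tendsto (fun n => S (x (g n))) atTop (𝓝 a) := by
    refine hxg.congr (fun n => ?_)
    exact (hSx (g n)).symm
  have hSfix : S a = a := tendsto_nhds_unique hSa2 hSa3
  exact ⟨a, haP, hSfix, hTfix⟩

end
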